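/- Let α and β be idempotent partial transformations of {1,...,n} with the common domain A of cardinality m < n, equal kernels ker(α) = ker(β), and rank k. Fix a₀ ∈ A, and extend α, β to total transformations α', β' by setting cα' = a₀α and cβ' = a₀β for all c ∉ A. Then ker(α') = ker(β'), im(α') = im(α), im(β') = im(β), and the set {α, β, α', β'} is closed under composition with each product of two of these elements equal to the element in the row of the first factor and column of the second factor (i.e., it forms a 2×2 rectangular band: xy has the kernel of x and the image of y). -/

import Mathlib

attribute [local instance] Classical.propDecidable

/-- The monoid of partial transformations of `{1,…,n}`, written as partial maps
on `Fin n`, composed left-to-right: `x(αβ) = (xα)β`. -/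
def PT (n : ℕ) : Type := Fin n → Option (Fin n)

instance (n : ℕ) : Mul (PT n) := ⟨fun α β x => (α x).bind β⟩
instance (n : ℕ) : One (PT n) := ⟨fun x => some x⟩

instance (n : ℕ) : Monoid (PT n) where
  mul_assoc a b c := funext fun x => by
    show ((a x).bind b).bind c = (a x).bind fun y => (b y).bind c
    cases a x <;> rfl
  one_mul a := funext fun _ => rfl
  mul_one a := funext fun x => by
    show (a x).bind some = a x
    cases a x <;> rfl

namespace PT
variable {n : ℕ}

/-- The domain of a partial transformation. -/
def dom (α : PT n) : Set (Fin n) := {x | α x ≠ none}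

/-- The image of a partial transformation. -/
def im (α : PT n) : Set (Fin n) := {y | ∃ x, α x = some y}

/-- The kernel: the partial equivalence `{(x,y) : x,y ∈ dom α, xα = yα}`. -/
def ker (α : PT n) : Fin n → Fin n → Prop :=
  fun x y => x ∈ α.dom ∧ y ∈ α.dom ∧ α x = α y

/-- The principal left ideal `PT_n · α` (the monoid contains `1`, so it contains `α`). -/
def leftIdeal (α : PT n) : Set (PT n) := Set.range fun γ => γ * α

/-- The principal right ideal `α · PT_n`. -/
def rightIdeal (α : PT n) : Set (PT n) := Set.range fun γ => α * γ

end PT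

/-- Extending two `R`-equivalent idempotents `α, β` (common domain `A`, `|A| = m < n`,
equal kernels, rank `k`) to total maps `α', β'` by sending everything outside `A` to
`a₀α`, resp. `a₀β`, yields `ker α' = ker β'`, `im α' = im α`, `im β' = im β`, and
`{α, β, α', β'}` is a `2×2` rectangular band: each product has the kernel (row) of its
first factor and the image (column) of its second factor. -/
theorem stmt_5 (n m k : ℕ) (α β α' β' : PT n) (A : Set (Fin n)) (a₀ : Fin n)
    (hα : α * α = α) (hβ : β * β = β)
    (hdα : α.dom = A) (hdβ : β.dom = A) (hA : A.ncard = m) (hmn : m < n)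
    (hker : α.ker = β.ker) (hrkα : α.im.ncard = k) (hrkβ : β.im.ncard = k)
    (ha₀ : a₀ ∈ A)
    (hα'in : ∀ x ∈ A, α' x = α x) (hα'out : ∀ x ∉ A, α' x = α a₀)
    (hβ'in : ∀ x ∈ A, β' x = β x) (hβ'out : ∀ x ∉ A, β' x = β a₀) :
    α'.ker = β'.ker ∧ α'.im = α.im ∧ β'.im = β.im ∧
    -- the 2×2 rectangular band multiplication table on {α, β, α', β'}
    α * β = β ∧ β * α = α ∧ α * α' = α ∧ α' * α = α' ∧
    α * β' = β ∧ β' * α = α' ∧ β * α' = α ∧ α' * β = β' ∧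
    β * β' = β ∧ β' * β = β' ∧ α' * β' = β' ∧ β' * α' = α' ∧
    α' * α' = α' ∧ β' * β' = β' := by
  classical
  have memA : ∀ x, x ∈ A ↔ α x ≠ none := fun x => by rw [← hdα]; exact Iff.rfl
  have memB : ∀ x, x ∈ A ↔ β x ≠ none := fun x => by rw [← hdβ]; exact Iff.rfl
  have hnA : ∀ {x}, x ∉ A → α x = none := fun {x} hx => by
    by_contra h; exact hx ((memA x).mpr h)
  have hnB : ∀ {x}, x ∉ A → β x = none := fun {x} hx => by
    by_contra h; exact hx ((memB x).mpr h)
  have hfixα : ∀ {x y}, α x = some y → α y = some y := by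
    intro x y h
    have h2 : (α x).bind α = α x := congrFun hα x
    rw [h] at h2; exact h2
  have hfixβ : ∀ {x y}, β x = some y → β y = some y := by
    intro x y h
    have h2 : (β x).bind β = β x := congrFun hβ x
    rw [h] at h2; exact h2
  have hk : ∀ {x y}, x ∈ A → y ∈ A → (α x = α y ↔ β x = β y) := by
    intro x y hx hy
    have h1 : α.ker x y ↔ β.ker x y := by rw [hker]
    constructor
    · intro h; exact (h1.mp ⟨(memA x).mp hx, (memA y).mp hy, h⟩).2.2
    · intro h; exact (h1.mpr ⟨(memB x).mp hx, (memB y).mp hy, h⟩).2.2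
  -- the auxiliary total map: identity on A, a₀ outside
  set σ : PT n := fun x => some (if x ∈ A then x else a₀) with hσdef
  have hσx : ∀ x, σ x = some (if x ∈ A then x else a₀) := fun _ => rfl
  have hασ : α * σ = α := funext fun x => by
    show (α x).bind σ = α x
    by_cases hx : x ∈ A
    · obtain ⟨y, hy⟩ := Option.ne_none_iff_exists'.mp ((memA x).mp hx)
      have hyA : y ∈ A := (memA y).mpr (by rw [hfixα hy]; exact Option.some_ne_none y)
      rw [hy]; show σ y = some y
      rw [hσx, if_pos hyA]
    · rw [hnA hx]; rfl
  have hβσ : β * σ = β := funext fun x => by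
    show (β x).bind σ = β x
    by_cases hx : x ∈ A
    · obtain ⟨y, hy⟩ := Option.ne_none_iff_exists'.mp ((memB x).mp hx)
      have hyA : y ∈ A := (memB y).mpr (by rw [hfixβ hy]; exact Option.some_ne_none y)
      rw [hy]; show σ y = some y
      rw [hσx, if_pos hyA]
    · rw [hnB hx]; rfl
  have hσα : σ * α = α' := funext fun x => by
    show (σ x).bind α = α' x
    rw [hσx]
    by_cases hx : x ∈ A
    · rw [if_pos hx]; show α x = α' x; exact (hα'in x hx).symm
    · rw [if_neg hx]; show α a₀ = α' x; exact (hα'out x hx).symm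
  have hσβ : σ * β = β' := funext fun x => by
    show (σ x).bind β = β' x
    rw [hσx]
    by_cases hx : x ∈ A
    · rw [if_pos hx]; show β x = β' x; exact (hβ'in x hx).symm
    · rw [if_neg hx]; show β a₀ = β' x; exact (hβ'out x hx).symm
  have hαβ : α * β = β := funext fun x => by
    show (α x).bind β = β x
    by_cases hx : x ∈ A
    · obtain ⟨y, hy⟩ := Option.ne_none_iff_exists'.mp ((memA x).mp hx)
      have hyA : y ∈ A := (memA y).mpr (by rw [hfixα hy]; exact Option.some_ne_none y)
      have hxy : α x = α y := by rw [hy, hfixα hy]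
      rw [hy]; show β y = β x
      exact ((hk hx hyA).mp hxy).symm
    · rw [hnA hx, hnB hx]; rfl
  have hβα : β * α = α := funext fun x => by
    show (β x).bind α = α x
    by_cases hx : x ∈ A
    · obtain ⟨y, hy⟩ := Option.ne_none_iff_exists'.mp ((memB x).mp hx)
      have hyA : y ∈ A := (memB y).mpr (by rw [hfixβ hy]; exact Option.some_ne_none y)
      have hxy : β x = β y := by rw [hy, hfixβ hy]
      rw [hy]; show α y = α x
      exact ((hk hx hyA).mpr hxy).symm
    · rw [hnB hx, hnA hx]; rfl
  -- domains of α', β' are everything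
  have hα'ne : ∀ x, α' x ≠ none := fun x => by
    by_cases hx : x ∈ A
    · rw [hα'in x hx]; exact (memA x).mp hx
    · rw [hα'out x hx]; exact (memA a₀).mp ha₀
  have hβ'ne : ∀ x, β' x ≠ none := fun x => by
    by_cases hx : x ∈ A
    · rw [hβ'in x hx]; exact (memB x).mp hx
    · rw [hβ'out x hx]; exact (memB a₀).mp ha₀
  have key : ∀ x y, α' x = α' y ↔ β' x = β' y := by
    intro x y
    by_cases hx : x ∈ A <;> by_cases hy : y ∈ A
    · rw [hα'in x hx, hα'in y hy, hβ'in x hx, hβ'in y hy]; exact hk hx hy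
    · rw [hα'in x hx, hα'out y hy, hβ'in x hx, hβ'out y hy]; exact hk hx ha₀
    · rw [hα'out x hx, hα'in y hy, hβ'out x hx, hβ'in y hy]; exact hk ha₀ hy
    · rw [hα'out x hx, hα'out y hy, hβ'out x hx, hβ'out y hy]; simp
  refine ⟨?_, ?_, ?_, hαβ, hβα, ?_, ?_, ?_, ?_, ?_, ?_, ?_, ?_, ?_, ?_, ?_, ?_⟩
  · -- ker α' = ker β'
    funext x y
    apply propext
    show (x ∈ α'.dom ∧ y ∈ α'.dom ∧ α' x = α' y) ↔ (x ∈ β'.dom ∧ y ∈ β'.dom ∧ β' x = β' y)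
    constructor
    · rintro ⟨-, -, h⟩; exact ⟨hβ'ne x, hβ'ne y, (key x y).mp h⟩
    · rintro ⟨-, -, h⟩; exact ⟨hα'ne x, hα'ne y, (key x y).mpr h⟩
  · -- im α' = im α
    ext y
    show (∃ x, α' x = some y) ↔ (∃ x, α x = some y)
    constructor
    · rintro ⟨x, hx⟩
      by_cases h : x ∈ A
      · exact ⟨x, by rw [← hα'in x h]; exact hx⟩
      · exact ⟨a₀, by rw [← hα'out x h]; exact hx⟩
    · rintro ⟨x, hx⟩
      have hxA : x ∈ A := (memA x).mpr (by rw [hx]; exact Option.some_ne_none y)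
      exact ⟨x, by rw [hα'in x hxA]; exact hx⟩
  · -- im β' = im β
    ext y
    show (∃ x, β' x = some y) ↔ (∃ x, β x = some y)
    constructor
    · rintro ⟨x, hx⟩
      by_cases h : x ∈ A
      · exact ⟨x, by rw [← hβ'in x h]; exact hx⟩
      · exact ⟨a₀, by rw [← hβ'out x h]; exact hx⟩
    · rintro ⟨x, hx⟩
      have hxA : x ∈ A := (memB x).mpr (by rw [hx]; exact Option.some_ne_none y)
      exact ⟨x, by rw [hβ'in x hxA]; exact hx⟩
  · -- α * α' = α
    rw [← hσα, ← mul_assoc, hασ, hα]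
  · -- α' * α = α'
    rw [← hσα, mul_assoc, hα]
  · -- α * β' = β
    rw [← hσβ, ← mul_assoc, hασ, hαβ]
  · -- β' * α = α'
    rw [← hσβ, ← hσα, mul_assoc, hβα]
  · -- β * α' = α
    rw [← hσα, ← mul_assoc, hβσ, hβα]
  · -- α' * β = β'
    rw [← hσα, ← hσβ, mul_assoc, hαβ]
  · -- β * β' = β
    rw [← hσβ, ← mul_assoc, hβσ, hβ]
  · -- β' * β = β'
    rw [← hσβ, mul_assoc, hβ]
  · -- α' * β' = β'
    rw [← hσα, ← hσβ, ← mul_assoc, mul_assoc σ α σ, hασ, mul_assoc, hαβ]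
  · -- β' * α' = α'
    rw [← hσβ, ← hσα, ← mul_assoc, mul_assoc σ β σ, hβσ, mul_assoc, hβα]
  · -- α' * α' = α'
    rw [← hσα, ← mul_assoc, mul_assoc σ α σ, hασ, mul_assoc, hα]
  · -- β' * β' = β'
    rw [← hσβ, ← mul_assoc, mul_assoc σ β σ, hβσ, mul_assoc, hβ]
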